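/- Let B₁, …, B_m ∈ ℂⁿ and y ∈ ℝ^m with yᵢ ≥ 0, and define the amplitude least squares functional L̃ : ℝⁿ → ℝ by L̃(x) = Σᵢ (√yᵢ − |Σⱼ (Bᵢ)ⱼ xⱼ|)². If x ∈ ℝⁿ is such that Σⱼ (Bᵢ)ⱼ xⱼ ≠ 0 for every i, then L̃ is differentiable at x with gradient ∇L̃(x) = −2·Σᵢ (√yᵢ/|Σⱼ (Bᵢ)ⱼ xⱼ| − 1)·(⟨Re Bᵢ, x⟩·Re Bᵢ + ⟨Im Bᵢ, x⟩·Im Bᵢ). (This gradient is the descent direction underlying the truncated amplitude flow; L̃ is not differentiable where some Σⱼ (Bᵢ)ⱼ xⱼ = 0.) -/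

import Mathlib

theorem stmt_10 {m n : ℕ} (B : Fin m → Fin n → ℂ) (y : Fin m → ℝ) (hy : ∀ i, 0 ≤ y i)
    (x : EuclideanSpace ℝ (Fin n)) (hx : ∀ i, (∑ j, B i j * (x j : ℂ)) ≠ 0) :
    HasGradientAt
      (fun z : EuclideanSpace ℝ (Fin n) =>
        ∑ i, (Real.sqrt (y i) - ‖∑ j, B i j * (z j : ℂ)‖) ^ 2)
      ((WithLp.toLp 2 fun j => -2 * ∑ i,
          (Real.sqrt (y i) / ‖∑ j', B i j' * (x j' : ℂ)‖ - 1) *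
            ((∑ j', (B i j').re * x j') * (B i j).re +
              (∑ j', (B i j').im * x j') * (B i j).im) : EuclideanSpace ℝ (Fin n)))
      x := by
  rw [hasGradientAt_iff_hasFDerivAt]
  set R : Fin m → EuclideanSpace ℝ (Fin n) :=
    fun i => (WithLp.toLp 2 fun j => (B i j).re : EuclideanSpace ℝ (Fin n)) with hR
  set I : Fin m → EuclideanSpace ℝ (Fin n) :=
    fun i => (WithLp.toLp 2 fun j => (B i j).im : EuclideanSpace ℝ (Fin n)) with hI
  have hre : ∀ i (z : EuclideanSpace ℝ (Fin n)),
      (∑ j, B i j * (z j : ℂ)).re = ∑ j, (B i j).re * z j := by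
    intro i z
    rw [Complex.re_sum]
    exact Finset.sum_congr rfl fun j _ => by simp [Complex.mul_re]
  have him : ∀ i (z : EuclideanSpace ℝ (Fin n)),
      (∑ j, B i j * (z j : ℂ)).im = ∑ j, (B i j).im * z j := by
    intro i z
    rw [Complex.im_sum]
    exact Finset.sum_congr rfl fun j _ => by simp [Complex.mul_im]
  have habs : ∀ i (z : EuclideanSpace ℝ (Fin n)), ‖∑ j, B i j * (z j : ℂ)‖ =
      Real.sqrt ((∑ j, (B i j).re * z j) * (∑ j, (B i j).re * z j) +
        (∑ j, (B i j).im * z j) * (∑ j, (B i j).im * z j)) := by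
    intro i z
    rw [Complex.norm_def, Complex.normSq_apply, hre, him]
  have hpos : ∀ i, (0 : ℝ) < (∑ j, (B i j).re * x j) * (∑ j, (B i j).re * x j) +
      (∑ j, (B i j).im * x j) * (∑ j, (B i j).im * x j) := by
    intro i
    rcases lt_or_eq_of_le (add_nonneg (mul_self_nonneg (∑ j, (B i j).re * x j))
        (mul_self_nonneg (∑ j, (B i j).im * x j))) with h | h
    · exact h
    · exact absurd ((norm_eq_zero).1 (by rw [habs, ← h, Real.sqrt_zero])) (hx i)
  have hqpos : ∀ i, (0:ℝ) < Real.sqrt ((∑ j, (B i j).re * x j) * (∑ j, (B i j).re * x j) +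
      (∑ j, (B i j).im * x j) * (∑ j, (B i j).im * x j)) :=
    fun i => Real.sqrt_pos.2 (hpos i)
  have hu : ∀ i, HasFDerivAt (fun z : EuclideanSpace ℝ (Fin n) => ∑ j, (B i j).re * z j)
      (innerSL ℝ (R i)) x := by
    intro i
    have h1 : (fun z : EuclideanSpace ℝ (Fin n) => ∑ j, (B i j).re * z j)
        = fun z => innerSL ℝ (R i) z := by
      funext z
      rw [innerSL_apply_apply, PiLp.inner_apply]
      simp [hR, RCLike.inner_apply, mul_comm]
    rw [h1]
    exact (innerSL ℝ (R i)).hasFDerivAt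
  have hv : ∀ i, HasFDerivAt (fun z : EuclideanSpace ℝ (Fin n) => ∑ j, (B i j).im * z j)
      (innerSL ℝ (I i)) x := by
    intro i
    have h1 : (fun z : EuclideanSpace ℝ (Fin n) => ∑ j, (B i j).im * z j)
        = fun z => innerSL ℝ (I i) z := by
      funext z
      rw [innerSL_apply_apply, PiLp.inner_apply]
      simp [hI, RCLike.inner_apply, mul_comm]
    rw [h1]
    exact (innerSL ℝ (I i)).hasFDerivAt
  have key : ∀ i, HasFDerivAt
      (fun z : EuclideanSpace ℝ (Fin n) =>
        (Real.sqrt (y i) - ‖∑ j, B i j * (z j : ℂ)‖) ^ 2)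
      ((-2 * (Real.sqrt (y i) / ‖∑ j', B i j' * (x j' : ℂ)‖ - 1)) •
        ((∑ j', (B i j').re * x j') • innerSL ℝ (R i) +
         (∑ j', (B i j').im * x j') • innerSL ℝ (I i))) x := by
    intro i
    have hfun : (fun z : EuclideanSpace ℝ (Fin n) =>
        (Real.sqrt (y i) - ‖∑ j, B i j * (z j : ℂ)‖) ^ 2)
        = fun z => (Real.sqrt (y i) -
            Real.sqrt ((∑ j, (B i j).re * z j) * (∑ j, (B i j).re * z j) +
              (∑ j, (B i j).im * z j) * (∑ j, (B i j).im * z j))) *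
          (Real.sqrt (y i) -
            Real.sqrt ((∑ j, (B i j).re * z j) * (∑ j, (B i j).re * z j) +
              (∑ j, (B i j).im * z j) * (∑ j, (B i j).im * z j))) := by
      funext z; rw [pow_two, habs]
    rw [hfun]
    have hs := (((hu i).mul (hu i)).add ((hv i).mul (hv i))).sqrt (ne_of_gt (hpos i))
    have hsub := (hasFDerivAt_const (Real.sqrt (y i)) x).sub hs
    refine (hsub.mul hsub).congr_fderiv ?_
    ext h
    have hq := ne_of_gt (hqpos i)
    rw [habs i x]
    simp only [ContinuousLinearMap.add_apply, ContinuousLinearMap.smul_apply,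
      ContinuousLinearMap.sub_apply, ContinuousLinearMap.zero_apply, smul_eq_mul,
      Pi.sub_apply, Pi.add_apply, Pi.mul_apply]
    rw [← pow_two, ← pow_two] at hq
    field_simp
    ring
  refine (HasFDerivAt.fun_sum fun i _ => key i).congr_fderiv ?_
  ext h
  have hRh : ∀ i, (innerSL ℝ (R i)) h = ∑ j, (B i j).re * h j := by
    intro i
    rw [innerSL_apply_apply, PiLp.inner_apply]
    simp [hR, RCLike.inner_apply, mul_comm]
  have hIh : ∀ i, (innerSL ℝ (I i)) h = ∑ j, (B i j).im * h j := by
    intro i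
    rw [innerSL_apply_apply, PiLp.inner_apply]
    simp [hI, RCLike.inner_apply, mul_comm]
  rw [ContinuousLinearMap.sum_apply, InnerProductSpace.toDual_apply_apply, PiLp.inner_apply]
  simp only [ContinuousLinearMap.add_apply, ContinuousLinearMap.smul_apply, smul_eq_mul,
    RCLike.inner_apply, conj_trivial]
  have hrhs : ∑ j, (-2 * ∑ i,
        (Real.sqrt (y i) / ‖∑ j', B i j' * (x j' : ℂ)‖ - 1) *
          ((∑ j', (B i j').re * x j') * (B i j).re +
            (∑ j', (B i j').im * x j') * (B i j).im)) * h j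
      = ∑ i, ∑ j, (-2 *
          ((Real.sqrt (y i) / ‖∑ j', B i j' * (x j' : ℂ)‖ - 1) *
            ((∑ j', (B i j').re * x j') * (B i j).re +
              (∑ j', (B i j').im * x j') * (B i j).im))) * h j := by
    rw [Finset.sum_comm]
    refine Finset.sum_congr rfl fun j _ => ?_
    rw [Finset.mul_sum, Finset.sum_mul]
  simp only [mul_comm (h.ofLp _)]
  rw [hrhs]
  refine Finset.sum_congr rfl fun i _ => ?_
  rw [hRh, hIh, Finset.mul_sum, Finset.mul_sum, ← Finset.sum_add_distrib]
  rw [Finset.mul_sum]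
  refine Finset.sum_congr rfl fun j _ => ?_
  ring
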